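/- For every n = 1,…,N, the quantity â^n := E_{Q̂^{m(n)}}[Ŷ^n] is a finite real number, and for every real random variable Y with Y ∈ L^1(Q̂^{m(n)}), E_{Q̂^{m(n)}}[Y] ≤ â^n, and u_n(X^n+Y) P-integrable, one has E_P[u_n(X^n+Y)] ≤ E_P[u_n(X^n+Ŷ^n)]. -/

import Mathlib

open MeasureTheory
open scoped NNReal ENNReal

lemma integrable_exp_sum_abs {Ω : Type*} [MeasurableSpace Ω] (P : Measure Ω)
    [IsProbabilityMeasure P] {N : ℕ} (X : Fin N → Ω → ℝ) (hXmeas : ∀ n, Measurable (X n))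
    (hXexp : ∀ n, ∀ a : ℝ, 0 < a → Integrable (fun ω => Real.exp (a * |X n ω|)) P)
    (s : Finset (Fin N)) : ∀ a : ℝ, 0 < a →
    Integrable (fun ω => Real.exp (a * ∑ j ∈ s, |X j ω|)) P := by
  induction s using Finset.induction with
  | empty => intro a ha; simp
  | insert i s hi ih =>
    intro a ha
    have hmeas : ∀ (t : Finset (Fin N)) (b : ℝ),
        Measurable (fun ω => Real.exp (b * ∑ j ∈ t, |X j ω|)) := by
      intro t b
      exact (Measurable.const_mul (Finset.measurable_sum t fun j _ => (hXmeas j).abs) b).exp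
    refine Integrable.mono (((hXexp i (2*a) (by linarith)).add (ih (2*a) (by linarith))).div_const 2)
      ((hmeas _ a).aestronglyMeasurable) (ae_of_all _ fun ω => ?_)
    rw [Real.norm_eq_abs, Real.norm_eq_abs, abs_of_nonneg (Real.exp_nonneg _),
      Finset.sum_insert hi, mul_add, Real.exp_add]
    have h1 : Real.exp (a * |X i ω|) * Real.exp (a * ∑ j ∈ s, |X j ω|)
        ≤ (Real.exp (a * |X i ω|)^2 + Real.exp (a * ∑ j ∈ s, |X j ω|)^2) / 2 := by
      nlinarith [sq_nonneg (Real.exp (a * |X i ω|) - Real.exp (a * ∑ j ∈ s, |X j ω|))]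
    have e1 : Real.exp (a * |X i ω|)^2 = Real.exp (2*a*|X i ω|) := by
      rw [sq, ← Real.exp_add]; ring_nf
    have e2 : Real.exp (a * ∑ j ∈ s, |X j ω|)^2 = Real.exp (2*a*∑ j ∈ s, |X j ω|) := by
      rw [sq, ← Real.exp_add]; ring_nf
    rw [e1, e2] at h1
    exact h1.trans (le_abs_self _)


/-- Condition 1 of a SORTE in the exponential case: for each `n`, the allocation
    `âⁿ := E_{Q̂^{m(n)}}[Ŷⁿ]` is a finite real number (i.e. `Ŷⁿ ∈ L¹(Q̂^{m(n)})`) and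
    `Ŷⁿ` solves the single-agent utility maximization problem `Uₙ^{Q̂^{m(n)}}(âⁿ)`. -/
theorem exponential_Yhat_single_agent_optimal
    {Ω : Type*} [MeasurableSpace Ω] (P : Measure Ω) [IsProbabilityMeasure P]
    (N h : ℕ) (hN : 1 ≤ N) (A : ℝ)
    (α : Fin N → ℝ) (hα : ∀ n, 0 < α n)
    -- exponential utilities
    (u : Fin N → ℝ → ℝ) (hu : ∀ n x, u n x = 1 - Real.exp (-(α n * x)))
    -- the partition `(I_m)` of `{1,…,N}`: agent `n` belongs to group `p n`
    (p : Fin N → Fin h) (hp : Function.Surjective p)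
    (X : Fin N → Ω → ℝ) (hXmeas : ∀ n, Measurable (X n))
    (βm : Fin h → ℝ)
    (hβm : ∀ m, βm m = ∑ n ∈ Finset.univ.filter (fun n => p n = m), (α n)⁻¹)
    (β : ℝ) (hβ : β = ∑ n, (α n)⁻¹)
    (Xbar : Fin h → Ω → ℝ)
    (hXbar : ∀ m ω, Xbar m ω = ∑ n ∈ Finset.univ.filter (fun n => p n = m), X n ω)
    (ER : ℝ) (hER : ER = ∑ n, ((α n)⁻¹ / β) * Real.log (α n))
    -- `E_m := E_P[exp(−X̄_m/β_m)] < ∞`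
    (hEint : ∀ m, Integrable (fun ω => Real.exp (-(Xbar m ω / βm m))) P)
    (Em : Fin h → ℝ) (hEm : ∀ m, Em m = ∫ ω, Real.exp (-(Xbar m ω / βm m)) ∂P)
    (d : Fin h → ℝ)
    (hd : ∀ m, d m = (∑ j, (βm j / β) * Real.log (Em j)) - Real.log (Em m))
    -- the candidate equilibrium pricing measures
    (Qhat : Fin h → Measure Ω)
    (hQhat : ∀ m, Qhat m
      = P.withDensity (fun ω => ENNReal.ofReal (Real.exp (-(Xbar m ω / βm m)) / Em m)))
    -- the candidate optimal allocation
    (Yhat : Fin N → Ω → ℝ)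
    (hYhat : ∀ k ω, Yhat k ω
      = -X k ω + (α k)⁻¹ * (Xbar (p k) ω / βm (p k) - d (p k))
        + (α k)⁻¹ * (A / β + Real.log (α k) - ER))
    -- all exponential moments of the `Xⁿ` are finite
    (hXexp : ∀ n, ∀ a : ℝ, 0 < a → Integrable (fun ω => Real.exp (a * |X n ω|)) P) :
    (∀ n, Integrable (Yhat n) (Qhat (p n))) ∧
    (∀ n, ∀ Y : Ω → ℝ, Integrable Y (Qhat (p n)) →
      (∫ ω, Y ω ∂(Qhat (p n))) ≤ (∫ ω, Yhat n ω ∂(Qhat (p n))) →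
      Integrable (fun ω => u n (X n ω + Y ω)) P →
      ∫ ω, u n (X n ω + Y ω) ∂P ≤ ∫ ω, u n (X n ω + Yhat n ω) ∂P) := by
  have hNpos : 0 < N := hN
  -- basic positivity
  have hβmpos : ∀ m, 0 < βm m := by
    intro m
    obtain ⟨n, hn⟩ := hp m
    rw [hβm]
    exact Finset.sum_pos (fun i _ => inv_pos.2 (hα i))
      ⟨n, by simp [hn]⟩
  -- abbreviation for the density kernel
  set g : Fin h → Ω → ℝ := fun m ω => Real.exp (-(Xbar m ω / βm m)) with hgdef
  have hXbarMeas : ∀ m, Measurable (Xbar m) := by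
    intro m
    have : Xbar m = fun ω => ∑ n ∈ Finset.univ.filter (fun n => p n = m), X n ω :=
      funext (hXbar m)
    rw [this]
    exact Finset.measurable_sum _ fun i _ => hXmeas i
  have hgmeas : ∀ m, Measurable (g m) := fun m =>
    (((hXbarMeas m).div_const _).neg).exp
  have hgpos : ∀ m ω, 0 < g m ω := fun m ω => Real.exp_pos _
  have hgint : ∀ m, Integrable (g m) P := hEint
  have hEmpos : ∀ m, 0 < Em m := by
    intro m
    rw [hEm]
    rw [MeasureTheory.integral_pos_iff_support_of_nonneg
      (fun ω => (hgpos m ω).le) (hgint m)]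
    have hsupp : Function.support (g m) = Set.univ :=
      Set.eq_univ_of_forall fun ω => (hgpos m ω).ne'
    rw [hsupp]
    simp
  -- integrability of `X k * g m` under `P`
  have hXgInt : ∀ m k, Integrable (fun ω => X k ω * g m ω) P := by
    intro m k
    set C : ℝ := 1 + (βm m)⁻¹ with hC
    have hCpos : 0 < C := by have := hβmpos m; positivity
    refine Integrable.mono (integrable_exp_sum_abs P X hXmeas hXexp Finset.univ C hCpos)
      (((hXmeas k).mul (hgmeas m)).aestronglyMeasurable) (ae_of_all _ fun ω => ?_)
    set S := ∑ j, |X j ω| with hS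
    have hSnonneg : 0 ≤ S := Finset.sum_nonneg fun j _ => abs_nonneg _
    have hXkS : |X k ω| ≤ S := Finset.single_le_sum (fun j _ => abs_nonneg (X j ω))
      (Finset.mem_univ k)
    have hXbarS : -(Xbar m ω) ≤ S := by
      rw [hXbar]
      calc -(∑ n ∈ Finset.univ.filter (fun n => p n = m), X n ω)
          ≤ |∑ n ∈ Finset.univ.filter (fun n => p n = m), X n ω| := neg_le_abs _
        _ ≤ ∑ n ∈ Finset.univ.filter (fun n => p n = m), |X n ω| :=
            Finset.abs_sum_le_sum_abs _ _
        _ ≤ S := Finset.sum_le_sum_of_subset_of_nonneg (Finset.filter_subset _ _)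
            (fun j _ _ => abs_nonneg _)
    have hgle : g m ω ≤ Real.exp ((βm m)⁻¹ * S) := by
      apply Real.exp_le_exp.2
      rw [neg_div' (βm m) (Xbar m ω), div_le_iff₀ (hβmpos m)]
      calc -(Xbar m ω) ≤ S := hXbarS
        _ ≤ (βm m)⁻¹ * S * βm m := by
            rw [mul_comm ((βm m)⁻¹) S, mul_assoc, inv_mul_cancel₀ (hβmpos m).ne']
            simp
    have hXkle : |X k ω| ≤ Real.exp S := by
      calc |X k ω| ≤ S := hXkS
        _ ≤ Real.exp S := by linarith [Real.add_one_le_exp S]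
    calc ‖X k ω * g m ω‖ = |X k ω| * g m ω := by
          rw [Real.norm_eq_abs, abs_mul, abs_of_pos (hgpos m ω)]
      _ ≤ Real.exp S * Real.exp ((βm m)⁻¹ * S) :=
          mul_le_mul hXkle hgle (hgpos m ω).le (Real.exp_nonneg _)
      _ = Real.exp (C * S) := by rw [← Real.exp_add, hC]; ring_nf
      _ ≤ ‖Real.exp (C * S)‖ := le_abs_self _
  have hXbargInt : ∀ m, Integrable (fun ω => Xbar m ω * g m ω) P := by
    intro m
    have heq : (fun ω => Xbar m ω * g m ω)
        = fun ω => ∑ n ∈ Finset.univ.filter (fun n => p n = m), X n ω * g m ω := by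
      funext ω
      rw [hXbar, Finset.sum_mul]
    rw [heq]
    exact integrable_finset_sum _ fun i _ => hXgInt m i
  -- the density as an `ℝ≥0`-valued function
  set F : Fin h → Ω → ℝ≥0 := fun m ω => (g m ω / Em m).toNNReal with hF
  have hFmeas : ∀ m, Measurable (F m) := fun m =>
    ((hgmeas m).div_const _).real_toNNReal
  have hFcoe : ∀ m ω, ((F m ω : ℝ≥0) : ℝ) = g m ω / Em m := fun m ω =>
    Real.coe_toNNReal _ (by have h1 := (hgpos m ω).le; have h2 := (hEmpos m).le; positivity)
  have hQ : ∀ m, Qhat m = P.withDensity (fun ω => ((F m ω : ℝ≥0) : ℝ≥0∞)) := by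
    intro m
    rw [hQhat m]
    rfl
  have hIntIff : ∀ m (f : Ω → ℝ), Integrable f (Qhat m)
      ↔ Integrable (fun ω => (g m ω / Em m) * f ω) P := by
    intro m f
    rw [hQ m, MeasureTheory.integrable_withDensity_iff_integrable_smul (hFmeas m)]
    simp only [NNReal.smul_def, smul_eq_mul, hFcoe]
  have hIntEq : ∀ m (f : Ω → ℝ), ∫ ω, f ω ∂(Qhat m)
      = ∫ ω, (g m ω / Em m) * f ω ∂P := by
    intro m f
    rw [hQ m, integral_withDensity_eq_integral_smul (hFmeas m)]
    simp only [NNReal.smul_def, smul_eq_mul, hFcoe]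
  -- integrability of `g * Yhat n`
  have hYgInt : ∀ n, Integrable (fun ω => g (p n) ω * Yhat n ω) P := by
    intro n
    have heq : (fun ω => g (p n) ω * Yhat n ω)
        = fun ω => -(X n ω * g (p n) ω)
          + ((α n)⁻¹ / βm (p n)) * (Xbar (p n) ω * g (p n) ω)
          + ((α n)⁻¹ * (A / β + Real.log (α n) - ER) - (α n)⁻¹ * d (p n)) * g (p n) ω := by
      funext ω
      rw [hYhat]
      ring
    rw [heq]
    exact (((hXgInt _ n).neg).add ((hXbargInt _).const_mul _)).add ((hgint _).const_mul _)
  have part1 : ∀ n, Integrable (Yhat n) (Qhat (p n)) := by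
    intro n
    rw [hIntIff]
    have heq : (fun ω => g (p n) ω / Em (p n) * Yhat n ω)
        = fun ω => (Em (p n))⁻¹ * (g (p n) ω * Yhat n ω) := by
      funext ω; ring
    rw [heq]
    exact (hYgInt n).const_mul _
  refine ⟨part1, ?_⟩
  intro n Y hYint hle huint
  set m := p n with hm
  set K : ℝ := Real.exp (d m - A / β - Real.log (α n) + ER) with hK
  have hKpos : 0 < K := Real.exp_pos _
  have hexpYhat : ∀ ω, Real.exp (-(α n * (X n ω + Yhat n ω))) = K * g m ω := by
    intro ω
    rw [hYhat]
    have hne := (hα n).ne'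
    have harg : -(α n * (X n ω + (-X n ω + (α n)⁻¹ * (Xbar m ω / βm m - d m)
          + (α n)⁻¹ * (A / β + Real.log (α n) - ER))))
        = (d m - A / β - Real.log (α n) + ER) + -(Xbar m ω / βm m) := by
      field_simp
      ring
    rw [harg, Real.exp_add]
  have huYhat : ∀ ω, u n (X n ω + Yhat n ω) = 1 - K * g m ω := by
    intro ω; rw [hu, hexpYhat]
  have huYhatInt : Integrable (fun ω => u n (X n ω + Yhat n ω)) P := by
    simp only [huYhat]
    exact (integrable_const 1).sub ((hgint m).const_mul K)
  have hgYInt : Integrable (fun ω => g m ω * Y ω) P := by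
    have h1 := (hIntIff m Y).mp hYint
    have heq : (fun ω => g m ω * Y ω) = fun ω => Em m * (g m ω / Em m * Y ω) := by
      funext ω
      have hne := (hEmpos m).ne'
      field_simp
    rw [heq]
    exact h1.const_mul _
  have hdiffInt : Integrable (fun ω => g m ω * (Y ω - Yhat n ω)) P := by
    have heq : (fun ω => g m ω * (Y ω - Yhat n ω))
        = fun ω => g m ω * Y ω - g m ω * Yhat n ω := by funext ω; ring
    rw [heq]
    exact hgYInt.sub (hYgInt n)
  have hRHSint : Integrable
      (fun ω => (1 - K * g m ω) + (α n * K) * (g m ω * (Y ω - Yhat n ω))) P :=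
    ((integrable_const 1).sub ((hgint m).const_mul K)).add (hdiffInt.const_mul _)
  have hpt : ∀ ω, u n (X n ω + Y ω)
      ≤ (1 - K * g m ω) + (α n * K) * (g m ω * (Y ω - Yhat n ω)) := by
    intro ω
    rw [hu]
    have hsplit : -(α n * (X n ω + Y ω))
        = -(α n * (X n ω + Yhat n ω)) + -(α n * (Y ω - Yhat n ω)) := by ring
    rw [hsplit, Real.exp_add, hexpYhat ω]
    have h1t : 1 - Real.exp (-(α n * (Y ω - Yhat n ω))) ≤ α n * (Y ω - Yhat n ω) := by
      linarith [Real.add_one_le_exp (-(α n * (Y ω - Yhat n ω)))]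
    have hKg : 0 ≤ K * g m ω := (mul_pos hKpos (hgpos m ω)).le
    nlinarith [mul_le_mul_of_nonneg_left h1t hKg]
  have hIq : ∀ f : Ω → ℝ, ∫ ω, f ω ∂(Qhat m) = (Em m)⁻¹ * ∫ ω, g m ω * f ω ∂P := by
    intro f
    rw [hIntEq m f,
      show (fun ω => g m ω / Em m * f ω) = fun ω => (Em m)⁻¹ * (g m ω * f ω) from
        funext fun ω => by ring]
    exact integral_const_mul _ _
  have hgYdiff : ∫ ω, g m ω * (Y ω - Yhat n ω) ∂P ≤ 0 := by
    have e1 : ∫ ω, g m ω * Y ω ∂P = Em m * ∫ ω, Y ω ∂(Qhat m) := by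
      rw [hIq Y, ← mul_assoc, mul_inv_cancel₀ (hEmpos m).ne', one_mul]
    have e2 : ∫ ω, g m ω * Yhat n ω ∂P = Em m * ∫ ω, Yhat n ω ∂(Qhat m) := by
      rw [hIq (Yhat n), ← mul_assoc, mul_inv_cancel₀ (hEmpos m).ne', one_mul]
    have e3 : ∫ ω, g m ω * (Y ω - Yhat n ω) ∂P
        = ∫ ω, g m ω * Y ω ∂P - ∫ ω, g m ω * Yhat n ω ∂P := by
      rw [show (fun ω => g m ω * (Y ω - Yhat n ω))
          = fun ω => g m ω * Y ω - g m ω * Yhat n ω from funext fun ω => by ring]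
      exact integral_sub hgYInt (hYgInt n)
    rw [e3, e1, e2]
    have := mul_le_mul_of_nonneg_left hle (hEmpos m).le
    linarith
  calc ∫ ω, u n (X n ω + Y ω) ∂P
      ≤ ∫ ω, ((1 - K * g m ω) + (α n * K) * (g m ω * (Y ω - Yhat n ω))) ∂P :=
        integral_mono huint hRHSint hpt
    _ = (∫ ω, (1 - K * g m ω) ∂P)
        + (α n * K) * ∫ ω, g m ω * (Y ω - Yhat n ω) ∂P := by
        have hA : Integrable (fun ω => 1 - K * g m ω) P :=
          (integrable_const 1).sub ((hgint m).const_mul K)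
        rw [integral_add hA (hdiffInt.const_mul _), integral_const_mul]
    _ ≤ ∫ ω, (1 - K * g m ω) ∂P := by
        have h0 : (α n * K) * ∫ ω, g m ω * (Y ω - Yhat n ω) ∂P ≤ 0 :=
          mul_nonpos_of_nonneg_of_nonpos (mul_pos (hα n) hKpos).le hgYdiff
        linarith
    _ = ∫ ω, u n (X n ω + Yhat n ω) ∂P := by
        simp only [huYhat]
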